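/- Let $k \ge 2$ and $l \ge 2$ be integers and let $G_l = K_{l-1} \vee (l K_k)$. Then $I(G_l) = k - \frac{1}{l}$. -/

import Mathlib

open SimpleGraph

noncomputable def isoCount {V : Type*} (G : SimpleGraph V) (S : Set V) : ℕ :=
  {v | v ∉ S ∧ ∀ w, G.Adj v w → w ∈ S}.ncard

noncomputable def isoTough {V : Type*} [Fintype V] (G : SimpleGraph V) : ℝ :=
  sInf {x : ℝ | ∃ S : Set V, 2 ≤ isoCount G S ∧ x = (S.ncard : ℝ) / (isoCount G S : ℝ)}

noncomputable def isoToughVar {V : Type*} [Fintype V] (G : SimpleGraph V) : ℝ :=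
  sInf {x : ℝ | ∃ S : Set V, 2 ≤ isoCount G S ∧ x = (S.ncard : ℝ) / ((isoCount G S : ℝ) - 1)}

/-- The join `K_c ∨ (d K_1)`. -/
def joinKE (c d : ℕ) : SimpleGraph (Fin c ⊕ Fin d) where
  Adj x y := x ≠ y ∧ (x.isLeft ∨ y.isLeft)
  symm := ⟨by intro x y h; tauto⟩
  loopless := ⟨by intro x h; exact h.1 rfl⟩

/-- The star `K_{1,n-1}`: join of one center with `n-1` leaves. -/
def starGraph (n : ℕ) : SimpleGraph (Fin 1 ⊕ Fin (n-1)) := joinKE 1 (n-1)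

/-- The graph `G_l = K_{l-1} ∨ (l K_k)`. -/
def Gl (k l : ℕ) : SimpleGraph (Fin (l-1) ⊕ Fin l × Fin k) where
  Adj x y := x ≠ y ∧ (x.isLeft ∨ y.isLeft ∨
    ∃ i p q, x = Sum.inr (i, p) ∧ y = Sum.inr (i, q))
  symm := ⟨by
    rintro x y ⟨h1, h2⟩
    refine ⟨h1.symm, ?_⟩
    rcases h2 with h | h | ⟨i, p, q, hx, hy⟩
    · tauto
    · tauto
    · exact Or.inr (Or.inr ⟨i, q, p, hy, hx⟩)⟩
  loopless := ⟨fun x h => h.1 rfl⟩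

noncomputable instance GlDec (k l : ℕ) : DecidableRel (Gl k l).Adj := Classical.decRel _


lemma Gl_adj {k l : ℕ} {x y : Fin (l-1) ⊕ Fin l × Fin k} :
    (Gl k l).Adj x y ↔ x ≠ y ∧ (x.isLeft ∨ y.isLeft ∨
      ∃ i p q, x = Sum.inr (i, p) ∧ y = Sum.inr (i, q)) := Iff.rfl

lemma Gl_lower (k l : ℕ) (hk : 2 ≤ k) (hl : 2 ≤ l)
    (S : Set (Fin (l-1) ⊕ Fin l × Fin k)) (h2 : 2 ≤ isoCount (Gl k l) S) :
    (k:ℝ) - 1/(l:ℝ) ≤ (S.ncard : ℝ) / (isoCount (Gl k l) S : ℝ) := by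
  classical
  set T : Set (Fin (l-1) ⊕ Fin l × Fin k) :=
    {v | v ∉ S ∧ ∀ w, (Gl k l).Adj v w → w ∈ S} with hTdef
  have hiso : isoCount (Gl k l) S = T.ncard := rfl
  have hTfin : T.Finite := Set.toFinite _
  have hSfin : S.Finite := Set.toFinite _
  set Tf := hTfin.toFinset with hTf
  have hTcard : T.ncard = Tf.card := Set.ncard_eq_toFinset_card _ hTfin
  have h2' : 2 ≤ Tf.card := by rw [← hTcard, ← hiso]; exact h2
  -- all isolated vertices are of the form inr
  have hinr : ∀ v ∈ T, ∃ i p, v = Sum.inr (i, p) := by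
    rintro v hv
    rcases v with a | ⟨i, p⟩
    · exfalso
      obtain ⟨u, hu, hune⟩ := Finset.exists_mem_ne (s := Tf) (by omega) (Sum.inl a)
      have huT : u ∈ T := (Set.Finite.mem_toFinset _).1 hu
      have hadj : (Gl k l).Adj (Sum.inl a) u :=
        ⟨fun h => hune h.symm, Or.inl (by simp)⟩
      exact huT.1 (hv.2 _ hadj)
    · exact ⟨i, p, rfl⟩
  -- at most one isolated vertex per block
  have hblk : ∀ i p q, Sum.inr (i,p) ∈ T → Sum.inr (i,q) ∈ T → p = q := by
    intro i p q hp hq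
    by_contra hne
    have hadj : (Gl k l).Adj (Sum.inr (i,p)) (Sum.inr (i,q)) :=
      ⟨by simp [hne], Or.inr (Or.inr ⟨i, p, q, rfl, rfl⟩)⟩
    exact hq.1 (hp.2 _ hadj)
  -- all left vertices are in S
  have hleft : ∀ a : Fin (l-1), Sum.inl a ∈ S := by
    intro a
    obtain ⟨v, hv⟩ : Tf.Nonempty := Finset.card_pos.1 (by omega)
    have hvT : v ∈ T := (Set.Finite.mem_toFinset _).1 hv
    obtain ⟨i, p, rfl⟩ := hinr v hvT
    exact hvT.2 _ ⟨by simp, Or.inr (Or.inl (by simp))⟩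
  -- the "rest of block" finsets
  set rest : (Fin (l-1) ⊕ Fin l × Fin k) → Finset (Fin (l-1) ⊕ Fin l × Fin k) :=
    fun v => match v with
    | Sum.inl _ => ∅
    | Sum.inr (i, p) =>
        (Finset.univ.image (fun q : Fin k => (Sum.inr (i,q) : Fin (l-1) ⊕ Fin l × Fin k))).erase
          (Sum.inr (i,p)) with hrest
  have hrest_mem : ∀ i p x, x ∈ rest (Sum.inr (i,p)) ↔ ∃ q, q ≠ p ∧ x = Sum.inr (i, q) := by
    intro i p x
    simp only [hrest, Finset.mem_erase, Finset.mem_image, Finset.mem_univ, true_and]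
    constructor
    · rintro ⟨hne, q, rfl⟩
      exact ⟨q, fun h => hne (by simp [h]), rfl⟩
    · rintro ⟨q, hq, rfl⟩
      exact ⟨by simp [hq], q, rfl⟩
  have hrest_card : ∀ i p, (rest (Sum.inr (i,p))).card = k - 1 := by
    intro i p
    rw [hrest]
    rw [Finset.card_erase_of_mem (by simp),
      Finset.card_image_of_injective _ (fun a b h => by simpa using h),
      Finset.card_univ, Fintype.card_fin]
  have hrest_sub : ∀ v ∈ Tf, rest v ⊆ hSfin.toFinset := by
    intro v hv x hx
    have hvT : v ∈ T := (Set.Finite.mem_toFinset _).1 hv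
    obtain ⟨i, p, rfl⟩ := hinr v hvT
    obtain ⟨q, hq, rfl⟩ := (hrest_mem i p x).1 hx
    rw [Set.Finite.mem_toFinset]
    exact hvT.2 _ ⟨by intro h; rw [Sum.inr.injEq, Prod.mk.injEq] at h; exact hq h.2.symm, Or.inr (Or.inr ⟨i, p, q, rfl, rfl⟩)⟩
  set A : Finset (Fin (l-1) ⊕ Fin l × Fin k) := Finset.univ.image Sum.inl with hA
  have hA_sub : A ⊆ hSfin.toFinset := by
    intro x hx
    simp only [hA, Finset.mem_image, Finset.mem_univ, true_and] at hx
    obtain ⟨a, rfl⟩ := hx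
    rw [Set.Finite.mem_toFinset]
    exact hleft a
  have hAcard : A.card = l - 1 := by
    rw [hA, Finset.card_image_of_injective _ Sum.inl_injective, Finset.card_univ,
      Fintype.card_fin]
  have hdisj : ∀ u ∈ Tf, ∀ w ∈ Tf, u ≠ w → Disjoint (rest u) (rest w) := by
    intro u hu w hw huw
    have huT : u ∈ T := (Set.Finite.mem_toFinset _).1 hu
    have hwT : w ∈ T := (Set.Finite.mem_toFinset _).1 hw
    obtain ⟨i, p, rfl⟩ := hinr u huT
    obtain ⟨j, q, rfl⟩ := hinr w hwT
    have hij : i ≠ j := by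
      rintro rfl
      exact huw (by rw [hblk i p q huT hwT])
    rw [Finset.disjoint_left]
    intro x hx hx'
    obtain ⟨a, _, rfl⟩ := (hrest_mem i p x).1 hx
    obtain ⟨b, _, hb⟩ := (hrest_mem j q _).1 hx'
    rw [Sum.inr.injEq, Prod.mk.injEq] at hb
    exact hij hb.1
  have hB : (Tf.biUnion rest).card = Tf.card * (k-1) := by
    rw [Finset.card_biUnion hdisj,
      Finset.sum_congr rfl (fun v hv => show (rest v).card = k - 1 from by
        obtain ⟨i, p, rfl⟩ := hinr v ((Set.Finite.mem_toFinset _).1 hv)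
        exact hrest_card i p),
      Finset.sum_const, smul_eq_mul]
  have hABdisj : Disjoint A (Tf.biUnion rest) := by
    rw [Finset.disjoint_left]
    intro x hx hx'
    simp only [hA, Finset.mem_image, Finset.mem_univ, true_and] at hx
    obtain ⟨a, rfl⟩ := hx
    obtain ⟨v, hv, hxv⟩ := Finset.mem_biUnion.1 hx'
    obtain ⟨i, p, rfl⟩ := hinr v ((Set.Finite.mem_toFinset _).1 hv)
    obtain ⟨q, _, h⟩ := (hrest_mem i p _).1 hxv
    exact (Sum.inl_ne_inr) h
  have hScard : (l-1) + Tf.card*(k-1) ≤ S.ncard := by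
    rw [Set.ncard_eq_toFinset_card _ hSfin]
    calc (l-1) + Tf.card*(k-1) = (A ∪ Tf.biUnion rest).card := by
          rw [Finset.card_union_of_disjoint hABdisj, hAcard, hB]
      _ ≤ _ := Finset.card_le_card
          (Finset.union_subset hA_sub (Finset.biUnion_subset.2 hrest_sub))
  have hml : Tf.card ≤ l := by
    have hinj : (↑Tf : Set (Fin (l-1) ⊕ Fin l × Fin k)).InjOn
        (fun v : Fin (l-1) ⊕ Fin l × Fin k => match v with
          | Sum.inl _ => (⟨0, by omega⟩ : Fin l)
          | Sum.inr (i,_) => i) := by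
      intro u hu w hw h
      have huT : u ∈ T := (Set.Finite.mem_toFinset _).1 hu
      have hwT : w ∈ T := (Set.Finite.mem_toFinset _).1 hw
      obtain ⟨i, p, rfl⟩ := hinr u huT
      obtain ⟨j, q, rfl⟩ := hinr w hwT
      simp only at h
      subst h
      rw [hblk i p q huT hwT]
    have h := Finset.card_le_card_of_injOn (s := Tf) (t := Finset.univ) _
      (fun a _ => Finset.mem_univ _) hinj
    simpa using h
  -- arithmetic
  rw [hiso, hTcard]
  have hm0 : (0:ℝ) < (Tf.card : ℝ) := by exact_mod_cast (by omega : 0 < Tf.card)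
  have hl0 : (0:ℝ) < (l:ℝ) := by exact_mod_cast (by omega : 0 < l)
  have hml' : (Tf.card : ℝ) ≤ (l:ℝ) := by exact_mod_cast hml
  have hS' : (l:ℝ) - 1 + (Tf.card:ℝ) * ((k:ℝ) - 1) ≤ (S.ncard : ℝ) := by
    calc (l:ℝ) - 1 + (Tf.card:ℝ)*((k:ℝ)-1)
        = (((l-1) + Tf.card*(k-1) : ℕ) : ℝ) := by
          push_cast [Nat.cast_sub (by omega : 1 ≤ l), Nat.cast_sub (by omega : 1 ≤ k)]
          ring
      _ ≤ _ := by exact_mod_cast hScard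
  have key : (k:ℝ) - 1/(l:ℝ) = ((l:ℝ)*(k:ℝ) - 1)/(l:ℝ) := by
    field_simp
  have hl2 : (2:ℝ) ≤ (l:ℝ) := by exact_mod_cast hl
  rw [key, div_le_div_iff₀ hl0 hm0]
  nlinarith [mul_nonneg (sub_nonneg.2 hS') hl0.le,
    mul_nonneg (sub_nonneg.2 hml') (by linarith : (0:ℝ) ≤ (l:ℝ) - 1)]

lemma Gl_mem (k l : ℕ) (hk : 2 ≤ k) (hl : 2 ≤ l) :
    ∃ S : Set (Fin (l-1) ⊕ Fin l × Fin k), 2 ≤ isoCount (Gl k l) S ∧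
      (k:ℝ) - 1/(l:ℝ) = (S.ncard : ℝ) / (isoCount (Gl k l) S : ℝ) := by
  classical
  set z : Fin k := ⟨0, by omega⟩ with hz
  set f : Fin l → (Fin (l-1) ⊕ Fin l × Fin k) := fun i => Sum.inr (i, z) with hf
  have hfinj : Function.Injective f := by
    intro a b h
    simpa [hf] using h
  set R : Set (Fin (l-1) ⊕ Fin l × Fin k) := Set.range f with hR
  have hTeq : {v | v ∉ Rᶜ ∧ ∀ w, (Gl k l).Adj v w → w ∈ Rᶜ} = R := by
    ext v
    simp only [Set.mem_setOf_eq, Set.mem_compl_iff, not_not]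
    constructor
    · exact fun h => h.1
    · rintro ⟨i, rfl⟩
      refine ⟨⟨i, rfl⟩, ?_⟩
      intro w hadj hw
      obtain ⟨j, rfl⟩ := hw
      rw [Gl_adj] at hadj
      obtain ⟨hne, hadj⟩ := hadj
      simp only [hf, Sum.isLeft_inr, Bool.false_eq_true, false_or] at hadj
      obtain ⟨i', p, q, h1, h2⟩ := hadj
      rw [Sum.inr.injEq, Prod.mk.injEq] at h1 h2
      exact hne (by simp only [hf]; rw [h1.1, ← h2.1])
  have hRcard : R.ncard = l := by
    rw [hR, ← Nat.card_coe_set_eq, Nat.card_range_of_injective hfinj,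
      Nat.card_eq_fintype_card, Fintype.card_fin]
  have hcount : isoCount (Gl k l) Rᶜ = l := by
    show ({v | v ∉ Rᶜ ∧ ∀ w, (Gl k l).Adj v w → w ∈ Rᶜ}).ncard = l
    rw [hTeq, hRcard]
  have hcompl : Rᶜ.ncard = l*k - 1 := by
    have h := Set.ncard_add_ncard_compl R (Set.toFinite _) (Set.toFinite _)
    have hV : Nat.card (Fin (l-1) ⊕ Fin l × Fin k) = (l-1) + l*k := by
      simp [Nat.card_eq_fintype_card]
    rw [hRcard, hV] at h
    have hlk : l ≤ l*k := Nat.le_mul_of_pos_right l (by omega)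
    omega
  refine ⟨Rᶜ, by rw [hcount]; omega, ?_⟩
  rw [hcount, hcompl]
  have h2 : ((l*k - 1 : ℕ) : ℝ) = (l:ℝ)*(k:ℝ) - 1 := by
    push_cast [Nat.cast_sub (by nlinarith : 1 ≤ l*k)]
    ring
  rw [h2]
  have hl0 : (l:ℝ) ≠ 0 := by
    exact_mod_cast (by omega : l ≠ 0)
  field_simp

theorem Gl_isoTough (k l : ℕ) (hk : 2 ≤ k) (hl : 2 ≤ l) :
    isoTough (Gl k l) = (k : ℝ) - 1 / (l : ℝ) := by
  apply IsLeast.csInf_eq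
  constructor
  · obtain ⟨S, hS1, hS2⟩ := Gl_mem k l hk hl
    exact ⟨S, hS1, hS2⟩
  · rintro x ⟨S, hS1, rfl⟩
    exact Gl_lower k l hk hl S hS1
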